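/- If ℓ ≡ 2 (mod 3) is prime and a is a non-negative integer with ord_ℓ(3a+1) = 1, then the number of 3-core partitions of ℓ²n + a is zero for every non-negative integer n. Equivalently, the coefficient c₃(ℓ²n+a) of q^{ℓ²n+a} in ∏_{n≥1}(1-q^{3n})³/(1-q^n) vanishes. -/

import Mathlib

/-- A finite set of naturals closed under predecessor is an initial segment. -/
lemma aux_lowerset_eq_range (S : Finset ℕ) (h : ∀ t, t + 1 ∈ S → t ∈ S) :
    S = Finset.range S.card := by
  have hdown : ∀ d t : ℕ, t + d ∈ S → t ∈ S := by
    intro d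
    induction d with
    | zero => intro t ht; simpa using ht
    | succ d ih =>
      intro t ht
      exact h t (ih (t+1) (by rwa [show t + 1 + d = t + (d+1) by omega]))
  ext t
  simp only [Finset.mem_range]
  constructor
  · intro ht
    have hsub : Finset.range (t+1) ⊆ S := by
      intro u hu
      simp only [Finset.mem_range] at hu
      exact hdown (t - u) u (by rwa [show u + (t - u) = t by omega])
    have := Finset.card_le_card hsub
    simp only [Finset.card_range] at this
    omega
  · intro ht
    by_contra hts
    have hsub : S ⊆ Finset.range t := by
      intro u hu
      simp only [Finset.mem_range]
      by_contra hut
      exact hts (hdown (u - t) t (by rwa [show t + (u - t) = u by omega]))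
    have := Finset.card_le_card hsub
    simp only [Finset.card_range] at this
    omega

lemma aux_zmod (ℓ : ℕ) (hp : ℓ.Prime) (h2 : ℓ % 3 = 2) (x y : ℤ)
    (h : (ℓ:ℤ) ∣ x^2 + x*y + y^2) : (ℓ:ℤ) ∣ x ∧ (ℓ:ℤ) ∣ y := by
  haveI := Fact.mk hp
  set u : ZMod ℓ := (x : ZMod ℓ) with hu
  set v : ZMod ℓ := (y : ZMod ℓ) with hv
  have h0 : u^2 + u*v + v^2 = 0 := by
    have := (ZMod.intCast_zmod_eq_zero_iff_dvd (x^2+x*y+y^2) ℓ).mpr h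
    push_cast at this
    exact this
  have hv0 : v = 0 := by
    by_contra hv0
    set t : ZMod ℓ := u * v⁻¹ with htd
    have key : (t^2 + t + 1) * v^2 = u^2 + u*v + v^2 := by
      have hvv : v * v⁻¹ = 1 := ZMod.mul_inv_of_unit v (isUnit_iff_ne_zero.mpr hv0)
      have htv : t * v = u := by rw [htd, mul_assoc, mul_comm v⁻¹ v, hvv, mul_one]
      linear_combination (t*v + u + v) * htv
    have ht : t^2 + t + 1 = 0 := by
      rcases mul_eq_zero.mp (key.trans h0) with h' | h'
      · exact h'
      · exact absurd (pow_eq_zero_iff (n := 2) (by norm_num) |>.mp h') hv0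
    have ht3 : t^3 = 1 := by linear_combination (t - 1) * ht
    have ht1 : t ≠ 1 := by
      intro h1
      rw [h1] at ht
      have h3 : ((3:ℕ) : ZMod ℓ) = 0 := by push_cast; linear_combination ht
      have := (ZMod.natCast_eq_zero_iff 3 ℓ).mp h3
      have hl3 : ℓ = 3 := (Nat.prime_dvd_prime_iff_eq hp Nat.prime_three).mp this
      omega
    have ht0 : t ≠ 0 := by
      intro h0'
      rw [h0'] at ht3
      simp at ht3
    have horder : orderOf t = 3 := orderOf_eq_prime ht3 ht1
    have hdvd3 : orderOf t ∣ ℓ - 1 :=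
      orderOf_dvd_of_pow_eq_one (ZMod.pow_card_sub_one_eq_one ht0)
    rw [horder] at hdvd3
    omega
  have hu0 : u = 0 := by
    rw [hv0] at h0
    have : u^2 = 0 := by linear_combination h0
    exact pow_eq_zero_iff (n := 2) (by norm_num) |>.mp this
  exact ⟨(ZMod.intCast_zmod_eq_zero_iff_dvd x ℓ).mp hu0,
    (ZMod.intCast_zmod_eq_zero_iff_dvd y ℓ).mp hv0⟩

set_option maxHeartbeats 1000000 in
lemma core_structure (μ : YoungDiagram)
    (hno : ∀ c ∈ μ.cells, ¬ (3 ∣ ((μ.rowLen c.1 - c.2) + (μ.colLen c.2 - c.1) - 1))) :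
    ∃ m1 m2 : ℕ, ((∑ i ∈ Finset.range (μ.colLen 0), μ.rowLen i : ℕ) : ℤ)
      = m1^2 + m2^2 - m1*m2 + m2 := by
  classical
  set k := μ.colLen 0 with hk
  set β : ℕ → ℕ := fun i => μ.rowLen i + (k - 1 - i) with hβ
  have hβe : ∀ i, β i = μ.rowLen i + (k - 1 - i) := fun _ => rfl
  have hrowpos : ∀ i, i < k → 1 ≤ μ.rowLen i := by
    intro i hi
    have h1 : (i, 0) ∈ μ := YoungDiagram.mem_iff_lt_colLen.mpr hi
    have := YoungDiagram.mem_iff_lt_rowLen.mp h1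
    omega
  have hrowzero : ∀ i, k ≤ i → μ.rowLen i = 0 := by
    intro i hi
    by_contra h
    have h1 : (i, 0) ∈ μ := YoungDiagram.mem_iff_lt_rowLen.mpr (by omega)
    have := YoungDiagram.mem_iff_lt_colLen.mp h1
    omega
  have hchain : ∀ i1 i2, i1 ≤ i2 → i2 < k → β i2 + (i2 - i1) ≤ β i1 := by
    intro i1 i2 h12 h2k
    have := μ.rowLen_anti i1 i2 h12
    rw [hβe, hβe]
    omega
  have hβnod : ∀ i, i < k → ¬ (3 ∣ β i) := by
    intro i hi hdvd
    refine hno (i, 0) ((YoungDiagram.mem_cells _).mpr (YoungDiagram.mem_iff_lt_colLen.mpr hi)) ?_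
    have h1 := hrowpos i hi
    have : (μ.rowLen i - 0) + (μ.colLen 0 - i) - 1 = β i := by
      rw [hβe]; omega
    rwa [this]
  -- closure under subtracting 3
  have hclose : ∀ i, i < k → 3 ≤ β i → ∃ i', i' < k ∧ β i' + 3 = β i := by
    intro i hik h3
    by_contra hcon
    push_neg at hcon
    set m := β i - 3 with hm
    have hmne : ∀ i', i' < k → β i' ≠ m := by
      intro i' hi' he
      exact absurd (by omega : β i' + 3 = β i) (hcon i' hi')
    have hPex : ∃ t, t = k ∨ (t < k ∧ β t < m) := ⟨k, Or.inl rfl⟩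
    set s := Nat.find hPex with hs
    have hPs := Nat.find_spec hPex
    have hsk : s ≤ k := Nat.find_le (Or.inl rfl)
    have hlt : ∀ i', i' < s → m < β i' := by
      intro i' hi'
      have hmin := Nat.find_min hPex hi'
      push_neg at hmin
      have hi'k : i' < k := by omega
      have := hmin.2 hi'k
      have := hmne i' hi'k
      omega
    have his : i < s := by
      by_contra hcon2
      have hsik : s < k := by omega
      have hβs : β s < m := by
        rcases hPs with h | h
        · omega
        · exact h.2
      have := hchain s i (by omega) hik
      omega
    have hupper : ∀ i', s ≤ i' → i' < k → β i' + (i' - s) + 1 ≤ m := by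
      intro i' hsi' hi'k
      have hsik : s < k := by omega
      have hβs : β s < m := by
        rcases hPs with h | h
        · omega
        · exact h.2
      have := hchain s i' hsi' hi'k
      omega
    have hks : k ≤ m + s := by
      rcases Nat.lt_or_ge s k with h | h
      · have h1 := hupper (k-1) (by omega) (by omega)
        have h2 := hrowpos (k-1) (by omega)
        have h3 := hβe (k-1)
        omega
      · omega
    set j := m + s - k with hj
    have hcell : ∀ i', ((i', j) ∈ μ ↔ i' < s) := by
      intro i'
      rw [YoungDiagram.mem_iff_lt_rowLen]
      constructor
      · intro hji'
        by_contra hcon2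
        push_neg at hcon2
        rcases Nat.lt_or_ge i' k with h | h
        · have h1 := hupper i' hcon2 h
          have h2 := hβe i'
          omega
        · have := hrowzero i' h
          omega
      · intro hi's
        have h1 : s - 1 < k := by omega
        have h2 := hchain i' (s-1) (by omega) h1
        have h3 := hlt (s-1) (by omega)
        have h4 := hβe i'
        omega
    have hcol : μ.colLen j = s := by
      have h1 : ¬ (s < μ.colLen j) := by
        rw [← YoungDiagram.mem_iff_lt_colLen, hcell]
        omega
      have h2 : s - 1 < μ.colLen j := by
        rw [← YoungDiagram.mem_iff_lt_colLen, hcell]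
        omega
      omega
    have hjrow : j < μ.rowLen i := YoungDiagram.mem_iff_lt_rowLen.mp ((hcell i).mpr his)
    refine hno (i, j) ((YoungDiagram.mem_cells _).mpr ((hcell i).mpr his)) ?_
    have hβi := hβe i
    have hhook3 : (μ.rowLen i - j) + (μ.colLen j - i) - 1 = 3 := by
      rw [hcol]
      omega
    rw [hhook3]
  -- the beta-set
  set D := (Finset.range k).image β with hD
  have hDmem : ∀ b, b ∈ D ↔ ∃ i, i < k ∧ β i = b := by
    intro b
    simp [hD, Finset.mem_image, Finset.mem_range]
  have hinj : ∀ a ∈ Finset.range k, ∀ b ∈ Finset.range k, β a = β b → a = b := by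
    intro a ha b hb hab
    simp only [Finset.mem_range] at ha hb
    by_contra hne
    rcases Nat.lt_or_ge a b with h | h
    · have := hchain a b (le_of_lt h) hb; omega
    · have := hchain b a (by omega) ha; omega
  have hcardD : D.card = k := by
    rw [hD, Finset.card_image_iff.mpr ?_, Finset.card_range]
    intro x hx y hy hxy
    exact hinj x (by simpa using hx) y (by simpa using hy) hxy
  have hsumD : ∑ b ∈ D, b = ∑ i ∈ Finset.range k, β i := Finset.sum_image hinj
  have hD3 : ∀ b ∈ D, b % 3 = 1 ∨ b % 3 = 2 := by
    intro b hb
    obtain ⟨i, hik, rfl⟩ := (hDmem b).mp hb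
    have := hβnod i hik
    omega
  have hDcl : ∀ b ∈ D, 3 ≤ b → b - 3 ∈ D := by
    intro b hb h3
    obtain ⟨i, hik, rfl⟩ := (hDmem b).mp hb
    obtain ⟨i', hi'k, hi'⟩ := hclose i hik h3
    exact (hDmem _).mpr ⟨i', hi'k, by omega⟩
  -- split by residue
  set D1 := D.filter (fun b => b % 3 = 1) with hD1
  set D2 := D.filter (fun b => b % 3 = 2) with hD2
  have hD2' : D2 = D.filter (fun b => ¬ b % 3 = 1) := by
    apply Finset.filter_congr
    intro b hb
    have := hD3 b hb
    omega
  have hcards : D1.card + D2.card = k := by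
    rw [hD2']
    rw [Finset.card_filter_add_card_filter_not]
    exact hcardD
  have hsums : ∑ b ∈ D1, b + ∑ b ∈ D2, b = ∑ b ∈ D, b := by
    rw [hD2']
    exact Finset.sum_filter_add_sum_filter_not D _ _
  -- each residue class is an initial segment
  have hseg : ∀ r : ℕ, 0 < r → r < 3 → ∀ Dr : Finset ℕ, Dr = D.filter (fun b => b % 3 = r) →
      ∃ m : ℕ, Dr.card = m ∧ ∑ b ∈ Dr, b = ∑ t ∈ Finset.range m, (3*t + r) := by
    intro r hr0 hr3 Dr hDr
    set E := Dr.image (fun b => b / 3) with hE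
    have hEmem : ∀ t, t ∈ E ↔ 3*t + r ∈ Dr := by
      intro t
      simp only [hE, Finset.mem_image]
      constructor
      · rintro ⟨b, hb, rfl⟩
        have hbf : b ∈ D.filter (fun b => b % 3 = r) := by rwa [← hDr]
        have hb' : b % 3 = r := (Finset.mem_filter.mp hbf).2
        have he : 3 * (b/3) + r = b := by omega
        rwa [he]
      · intro h
        exact ⟨3*t+r, h, by omega⟩
    have hpred : ∀ t, t + 1 ∈ E → t ∈ E := by
      intro t ht
      rw [hEmem] at ht ⊢
      have htf : 3*(t+1)+r ∈ D.filter (fun b => b % 3 = r) := by rwa [← hDr]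
      have hbD : 3*(t+1)+r ∈ D := (Finset.mem_filter.mp htf).1
      have h3 : 3*(t+1)+r - 3 ∈ D := hDcl _ hbD (by omega)
      have he : 3*(t+1)+r-3 = 3*t+r := by omega
      rw [he] at h3
      rw [hDr, Finset.mem_filter]
      exact ⟨h3, by omega⟩
    have hEr := aux_lowerset_eq_range E hpred
    have hDrE : Dr = E.image (fun t => 3*t+r) := by
      ext b
      simp only [Finset.mem_image]
      constructor
      · intro hb
        have hbf : b ∈ D.filter (fun b => b % 3 = r) := by rwa [← hDr]
        have hb' : b % 3 = r := (Finset.mem_filter.mp hbf).2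
        refine ⟨b/3, ?_, by omega⟩
        rw [hEmem]
        have he : 3*(b/3)+r = b := by omega
        rwa [he]
      · rintro ⟨t, ht, rfl⟩
        exact (hEmem t).mp ht
    have hinj3 : Function.Injective (fun t : ℕ => 3*t+r) := by
      intro x y h
      simp only at h
      omega
    refine ⟨E.card, ?_, ?_⟩
    · rw [hDrE, Finset.card_image_of_injective _ hinj3, hEr, Finset.card_range]
    · rw [hDrE, hEr, Finset.sum_image (fun x _ y _ h => hinj3 h), Finset.card_range]
  obtain ⟨m1, hm1card, hm1sum⟩ := hseg 1 (by norm_num) (by norm_num) D1 hD1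
  obtain ⟨m2, hm2card, hm2sum⟩ := hseg 2 (by norm_num) (by norm_num) D2 hD2
  refine ⟨m1, m2, ?_⟩
  have hkm : k = m1 + m2 := by omega
  -- sums of beta
  have hβsum : ∑ i ∈ Finset.range k, β i
      = (∑ i ∈ Finset.range k, μ.rowLen i) + ∑ i ∈ Finset.range k, (k-1-i) := by
    rw [← Finset.sum_add_distrib]
  have hrefl : ∑ i ∈ Finset.range k, (k-1-i) = ∑ i ∈ Finset.range k, i :=
    Finset.sum_range_reflect (fun i => i) k
  have gauss : ∀ nn : ℕ, (∑ i ∈ Finset.range nn, i)*2 + nn = nn*nn := by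
    intro nn
    rw [Finset.sum_range_id_mul_two]
    cases nn with
    | zero => simp
    | succ n => simp only [Nat.succ_sub_one]; ring
  have hexp : ∀ r m : ℕ, ∑ t ∈ Finset.range m, (3*t + r) = 3*(∑ t ∈ Finset.range m, t) + m*r := by
    intro r m
    rw [Finset.sum_add_distrib, Finset.mul_sum, Finset.sum_const, Finset.card_range, smul_eq_mul]
  have hA : (∑ i ∈ Finset.range k, μ.rowLen i) + (∑ i ∈ Finset.range k, i)
      = (3*(∑ t ∈ Finset.range m1, t) + m1*1) + (3*(∑ t ∈ Finset.range m2, t) + m2*2) := by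
    rw [← hexp, ← hexp, ← hm1sum, ← hm2sum, hsums, hsumD, hβsum, hrefl]
  set S := ∑ i ∈ Finset.range k, μ.rowLen i with hS
  set K := ∑ i ∈ Finset.range k, i with hK
  set s1 := ∑ t ∈ Finset.range m1, t with hs1
  set s2 := ∑ t ∈ Finset.range m2, t with hs2
  have g0 : K*2 + (m1+m2) = (m1+m2)*(m1+m2) := by rw [← hkm]; exact gauss k
  have g1 : s1*2 + m1 = m1*m1 := gauss m1
  have g2 : s2*2 + m2 = m2*m2 := gauss m2
  have hA' : (S:ℤ) + K = 3*s1 + m1*1 + (3*s2 + m2*2) := by exact_mod_cast hA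
  have g0' : (K:ℤ)*2 + (m1+m2) = (m1+m2)*(m1+m2) := by exact_mod_cast g0
  have g1' : (s1:ℤ)*2 + m1 = m1*m1 := by exact_mod_cast g1
  have g2' : (s2:ℤ)*2 + m2 = m2*m2 := by exact_mod_cast g2
  have hZ : (S:ℤ)*2 = ((m1:ℤ)^2 + m2^2 - m1*m2 + m2)*2 := by
    linear_combination 2*hA' + 3*g1' + 3*g2' - g0'
  linarith

/-- The hook length of the cell in row `i`, column `j` of a Young diagram. -/
def YoungDiagram.hookLength (μ : YoungDiagram) (i j : ℕ) : ℕ :=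
  (μ.rowLen i - j) + (μ.colLen j - i) - 1

/-- The number of cells of `μ` whose hook length is divisible by `t`. -/
def hookCount (t : ℕ) (μ : YoungDiagram) : ℕ :=
  (μ.cells.filter (fun c => t ∣ μ.hookLength c.1 c.2)).card

/-- The Young diagram attached to a partition of `n`. -/
def Nat.Partition.toYoung {n : ℕ} (p : n.Partition) : YoungDiagram :=
  YoungDiagram.ofRowLens (p.parts.sort (· ≥ ·)) (List.sortedGE_iff_pairwise.mpr (p.parts.pairwise_sort _))

/-- `p_t(a,b;n)`: the number of partitions `λ ⊢ n` with `#𝓗_t(λ) ≡ a (mod b)`. -/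
def hookP (t a b n : ℕ) : ℕ :=
  Fintype.card {p : n.Partition // hookCount t p.toYoung % b = a % b}

theorem three_core_vanishing (ℓ : ℕ) (hp : ℓ.Prime) (h2 : ℓ % 3 = 2) (a : ℕ)
    (hdvd : ℓ ∣ 3 * a + 1) (hndvd : ¬ ℓ ^ 2 ∣ 3 * a + 1) (n : ℕ) :
    Fintype.card {p : (ℓ ^ 2 * n + a).Partition // hookCount 3 p.toYoung = 0} = 0 := by
  rw [Fintype.card_eq_zero_iff]
  refine ⟨fun q => ?_⟩
  obtain ⟨p, hp0⟩ := q
  have hfe : (p.toYoung.cells.filter (fun c => 3 ∣ p.toYoung.hookLength c.1 c.2)) = ∅ :=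
    Finset.card_eq_zero.mp hp0
  have hno : ∀ c ∈ p.toYoung.cells,
      ¬ (3 ∣ ((p.toYoung.rowLen c.1 - c.2) + (p.toYoung.colLen c.2 - c.1) - 1)) := by
    intro c hc hdvd3
    have hmem : c ∈ (p.toYoung.cells.filter (fun c => 3 ∣ p.toYoung.hookLength c.1 c.2)) :=
      Finset.mem_filter.mpr ⟨hc, hdvd3⟩
    rw [hfe] at hmem
    exact absurd hmem (Finset.notMem_empty c)
  obtain ⟨m1, m2, hm⟩ := core_structure p.toYoung hno
  have hNsum : (∑ i ∈ Finset.range (p.toYoung.colLen 0), p.toYoung.rowLen i) = ℓ^2*n+a := by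
    have hpos : ∀ x ∈ p.parts.sort (· ≥ ·), 0 < x := fun x hx =>
      p.parts_pos ((Multiset.mem_sort _).mp hx)
    have hlen : p.toYoung.colLen 0 = (p.parts.sort (· ≥ ·)).length := by
      rw [← YoungDiagram.length_rowLens]
      exact YoungDiagram.rowLens_length_ofRowLens hpos
    have hrl : ∀ (i : ℕ) (h : i < (p.parts.sort (· ≥ ·)).length),
        p.toYoung.rowLen i = (p.parts.sort (· ≥ ·))[i] := by
      intro i h
      exact YoungDiagram.rowLen_ofRowLens ⟨i, h⟩
    rw [hlen, ← Fin.sum_univ_eq_sum_range]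
    rw [Finset.sum_congr rfl (fun (i : Fin (p.parts.sort (· ≥ ·)).length) _ => hrl i.1 i.2)]
    rw [Fin.sum_univ_getElem]
    have h1 : (p.parts.sort (· ≥ ·)).sum = p.parts.sum := by
      rw [← Multiset.sum_coe, Multiset.sort_eq]
    rw [h1, p.parts_sum]
  rw [hNsum] at hm
  have hmz : ((ℓ:ℤ)^2*n+a) = (m1:ℤ)^2 + m2^2 - m1*m2 + m2 := by
    rw [← hm]; push_cast; ring
  have hxy : ((m2:ℤ) - 2*m1)^2 + ((m2:ℤ) - 2*m1)*((m1:ℤ) + m2 + 1) + ((m1:ℤ) + m2 + 1)^2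
      = 3*((ℓ:ℤ)^2*n+a) + 1 := by
    linear_combination (-3 : ℤ)*hmz
  have hld : (ℓ:ℤ) ∣ ((m2:ℤ) - 2*m1)^2 + ((m2:ℤ) - 2*m1)*((m1:ℤ) + m2 + 1) + ((m1:ℤ) + m2 + 1)^2 := by
    rw [hxy]
    have h1 : (ℓ:ℤ) ∣ (3*a+1 : ℤ) := by exact_mod_cast Int.natCast_dvd_natCast.mpr hdvd
    have he : 3*((ℓ:ℤ)^2*n+a)+1 = (ℓ:ℤ)*(3*ℓ*n) + (3*a+1) := by ring
    rw [he]
    exact dvd_add ⟨3*ℓ*n, rfl⟩ h1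
  obtain ⟨hlx, hly⟩ := aux_zmod ℓ hp h2 _ _ hld
  have hsq : (ℓ:ℤ)^2 ∣ ((m2:ℤ) - 2*m1)^2 + ((m2:ℤ) - 2*m1)*((m1:ℤ) + m2 + 1) + ((m1:ℤ) + m2 + 1)^2 := by
    obtain ⟨u, hu⟩ := hlx
    obtain ⟨v, hv⟩ := hly
    rw [hu, hv]
    exact ⟨u^2+u*v+v^2, by ring⟩
  rw [hxy] at hsq
  have hfin : (ℓ:ℤ)^2 ∣ (3*a+1 : ℤ) := by
    have h4 := dvd_sub hsq (⟨3*(n:ℤ), rfl⟩ : (ℓ:ℤ)^2 ∣ (ℓ:ℤ)^2*(3*n))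
    have h3 : (3*((ℓ:ℤ)^2*n+a)+1) - (ℓ:ℤ)^2*(3*n) = 3*a+1 := by ring
    rwa [h3] at h4
  exact hndvd (by exact_mod_cast hfin)
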